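/- Let σ > 0 and θ ∈ (0, π) be real numbers, and set s = √(1 + σ² − 2σ cos θ), which is strictly positive. Let δφ be a real number satisfying sin δφ = (σ cos θ − 1)/s and cos δφ = σ sin θ / s (these are consistent, since the sum of their squares equals 1). Then σ cos(θ + δφ) = cos δφ; equivalently, whenever cos(θ + δφ) ≠ 0, σ = cos δφ / cos(θ + δφ). -/

import Mathlib

open Real

/-- For `σ > 0`, `θ ∈ (0, π)`, `s = √(1 + σ² − 2σ cos θ)`,
and `δφ` with `sin δφ = (σ cos θ − 1)/s` and `cos δφ = σ sin θ / s`, the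
quantity `s` is strictly positive and `σ cos(θ + δφ) = cos δφ`; equivalently,
whenever `cos(θ + δφ) ≠ 0`, `σ = cos δφ / cos(θ + δφ)`. -/
theorem singular_value_angle_relation
    (σ θ s δφ : ℝ) (hσ : 0 < σ) (hθ : θ ∈ Set.Ioo 0 π)
    (hs : s = Real.sqrt (1 + σ ^ 2 - 2 * σ * Real.cos θ))
    (hsin : Real.sin δφ = (σ * Real.cos θ - 1) / s)
    (hcos : Real.cos δφ = σ * Real.sin θ / s) :
    0 < s ∧ σ * Real.cos (θ + δφ) = Real.cos δφ ∧
      (Real.cos (θ + δφ) ≠ 0 → σ = Real.cos δφ / Real.cos (θ + δφ)) := by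
  obtain ⟨hθ0, hθπ⟩ := hθ
  have hcoslt : Real.cos θ < 1 := by
    by_contra h
    push_neg at h
    have h1 : Real.cos θ = 1 := le_antisymm (Real.cos_le_one θ) h
    have := Real.cos_eq_one_iff_of_lt_of_lt (x := θ) (by linarith [Real.pi_pos]) (by linarith [Real.two_pi_pos, Real.pi_pos])
    rw [this] at h1
    exact absurd h1 (ne_of_gt hθ0)
  have hpos : 0 < 1 + σ ^ 2 - 2 * σ * Real.cos θ := by nlinarith [sq_nonneg (1 - σ)]
  have hspos : 0 < s := hs ▸ Real.sqrt_pos.mpr hpos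
  have hsne : s ≠ 0 := ne_of_gt hspos
  have key : σ * Real.cos (θ + δφ) = Real.cos δφ := by
    rw [Real.cos_add, hsin, hcos]
    field_simp
    ring
  exact ⟨hspos, key, fun h => by field_simp [← key]; exact key⟩
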